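/- Let A ∈ ℝ^{n×n} be a symmetric matrix, let I_1,…,I_k be the orbits of the action of Aut(A) on {1,…,n}, let n_j = |I_j|, and for 1 ≤ i,j ≤ k let A_{ij} denote the submatrix of A with rows indexed by I_i and columns indexed by I_j. Suppose there exists r, 1 ≤ r ≤ k, such that: (1) the vector s(A) = A·1 is discriminative, i.e., s_i(A) ≠ s_j(A) whenever i and j lie in different orbits of Aut(A); (2) rank(A_{rj}) = n_j for all j ≠ r; and (3) the symmetric matrix A_{rr} has simple spectrum (n_r distinct eigenvalues). Then DS(A) is convex exact: Aut_conv(A) = conv(Aut(A)). -/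

import Mathlib

/- Setting: graphs are symmetric real n×n matrices. `pm n σ` is the permutation
matrix of `σ` (entry (i,j) equals 1 iff σ j = i, so it "sends j to σ j").
`DS n` is the set of doubly stochastic matrices, `Aut A` the set of permutation
matrices commuting with `A`, and `AutConv A` its doubly stochastic relaxation. -/

open Matrix MeasureTheory Finset

noncomputable section

def pm (n : ℕ) (σ : Equiv.Perm (Fin n)) : Matrix (Fin n) (Fin n) ℝ :=
  Matrix.of fun i j => if σ j = i then (1 : ℝ) else 0

def IsPermMatrix {n : ℕ} (P : Matrix (Fin n) (Fin n) ℝ) : Prop :=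
  ∃ σ : Equiv.Perm (Fin n), P = pm n σ

def DS (n : ℕ) : Set (Matrix (Fin n) (Fin n) ℝ) :=
  {S | (∀ i j, 0 ≤ S i j) ∧ (∀ i, ∑ j, S i j = 1) ∧ (∀ j, ∑ i, S i j = 1)}

def Aut {n : ℕ} (A : Matrix (Fin n) (Fin n) ℝ) : Set (Matrix (Fin n) (Fin n) ℝ) :=
  {P | IsPermMatrix P ∧ A * P = P * A}

def AutConv {n : ℕ} (A : Matrix (Fin n) (Fin n) ℝ) : Set (Matrix (Fin n) (Fin n) ℝ) :=
  {S | S ∈ DS n ∧ A * S = S * A}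

def ConvexExact {n : ℕ} (A : Matrix (Fin n) (Fin n) ℝ) : Prop :=
  AutConv A = convexHull ℝ (Aut A)

/-- `s(A) = A·1`, the vector of row sums of `A`. -/
def sVec {n : ℕ} (A : Matrix (Fin n) (Fin n) ℝ) : Fin n → ℝ := A *ᵥ 1

/-- `i` and `j` lie in the same orbit of the action of `Aut A` on indices. -/
def SameAutOrbit {n : ℕ} (A : Matrix (Fin n) (Fin n) ℝ) (i j : Fin n) : Prop :=
  ∃ P ∈ Aut A, P i j = 1

/-- `O` is an orbit of the action of `Aut A` on the indices. -/
def IsAutOrbit {n : ℕ} (A : Matrix (Fin n) (Fin n) ℝ) (O : Finset (Fin n)) : Prop :=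
  ∃ i, ∀ j, j ∈ O ↔ SameAutOrbit A i j

/-- A real square matrix has simple spectrum: its characteristic polynomial has as many
distinct real roots as the size of the matrix (all eigenvalues real and distinct). -/
def SimpleSpectrum {m : Type*} [Fintype m] [DecidableEq m] (M : Matrix m m ℝ) : Prop :=
  M.charpoly.roots.toFinset.card = Fintype.card m

namespace Stmt7
open Polynomial

variable {n : ℕ}

/-! ### permutation matrices -/

lemma pm_apply (σ : Equiv.Perm (Fin n)) (i j : Fin n) :
    pm n σ i j = if σ j = i then (1:ℝ) else 0 := rfl

lemma mul_pm_apply (M : Matrix (Fin n) (Fin n) ℝ) (σ : Equiv.Perm (Fin n)) (i j : Fin n) :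
    (M * pm n σ) i j = M i (σ j) := by
  simp [Matrix.mul_apply, pm_apply, mul_ite]

lemma pm_mul_apply (M : Matrix (Fin n) (Fin n) ℝ) (σ : Equiv.Perm (Fin n)) (i j : Fin n) :
    (pm n σ * M) i j = M (σ⁻¹ i) j := by
  simp only [Matrix.mul_apply, pm_apply, ite_mul, one_mul, zero_mul]
  rw [Finset.sum_eq_single (σ⁻¹ i)] <;> simp +contextual [Equiv.Perm.eq_inv_iff_eq, Equiv.eq_symm_apply]

/-- the automorphism group as a set of permutations -/
def G (A : Matrix (Fin n) (Fin n) ℝ) : Set (Equiv.Perm (Fin n)) :=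
  {σ | ∀ i j, A (σ i) (σ j) = A i j}

lemma pm_mem_aut_iff {A : Matrix (Fin n) (Fin n) ℝ} {σ : Equiv.Perm (Fin n)} :
    pm n σ ∈ Aut A ↔ σ ∈ G A := by
  constructor
  · rintro ⟨-, hc⟩ i j
    have := congrFun (congrFun hc (σ i)) j
    rw [mul_pm_apply, pm_mul_apply] at this
    simpa using this
  · intro h
    refine ⟨⟨σ, rfl⟩, ?_⟩
    ext i j
    rw [mul_pm_apply, pm_mul_apply]
    have := h (σ⁻¹ i) j
    simpa using this

lemma one_mem_G (A : Matrix (Fin n) (Fin n) ℝ) : (1 : Equiv.Perm (Fin n)) ∈ G A := by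
  intro i j; rfl

lemma mul_mem_G {A : Matrix (Fin n) (Fin n) ℝ} {σ τ : Equiv.Perm (Fin n)}
    (hσ : σ ∈ G A) (hτ : τ ∈ G A) : σ * τ ∈ G A := by
  intro i j
  simpa [Equiv.Perm.mul_apply] using (hσ (τ i) (τ j)).trans (hτ i j)

lemma inv_mem_G {A : Matrix (Fin n) (Fin n) ℝ} {σ : Equiv.Perm (Fin n)}
    (hσ : σ ∈ G A) : σ⁻¹ ∈ G A := by
  intro i j
  have := hσ (σ⁻¹ i) (σ⁻¹ j)
  simpa using this.symm

lemma same_iff {A : Matrix (Fin n) (Fin n) ℝ} {i j : Fin n} :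
    SameAutOrbit A i j ↔ ∃ σ ∈ G A, σ j = i := by
  constructor
  · rintro ⟨P, hP, hij⟩
    obtain ⟨σ, rfl⟩ := hP.1
    refine ⟨σ, pm_mem_aut_iff.mp hP, ?_⟩
    by_contra h
    rw [pm_apply, if_neg h] at hij
    norm_num at hij
  · rintro ⟨σ, hσ, rfl⟩
    exact ⟨pm n σ, pm_mem_aut_iff.mpr hσ, by rw [pm_apply, if_pos rfl]⟩

lemma same_refl (A : Matrix (Fin n) (Fin n) ℝ) (i : Fin n) : SameAutOrbit A i i :=
  same_iff.mpr ⟨1, one_mem_G A, rfl⟩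

lemma same_symm {A : Matrix (Fin n) (Fin n) ℝ} {i j : Fin n}
    (h : SameAutOrbit A i j) : SameAutOrbit A j i := by
  obtain ⟨σ, hσ, rfl⟩ := same_iff.mp h
  exact same_iff.mpr ⟨σ⁻¹, inv_mem_G hσ, by simp⟩

lemma same_trans {A : Matrix (Fin n) (Fin n) ℝ} {i j k : Fin n}
    (h1 : SameAutOrbit A i j) (h2 : SameAutOrbit A j k) : SameAutOrbit A i k := by
  obtain ⟨σ, hσ, rfl⟩ := same_iff.mp h1
  obtain ⟨τ, hτ, rfl⟩ := same_iff.mp h2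
  exact same_iff.mpr ⟨σ * τ, mul_mem_G hσ hτ, rfl⟩

lemma sVec_apply (A : Matrix (Fin n) (Fin n) ℝ) (i : Fin n) :
    sVec A i = ∑ j, A i j := by
  simp [sVec, Matrix.mulVec, dotProduct]

lemma sVec_G_invariant {A : Matrix (Fin n) (Fin n) ℝ} {σ : Equiv.Perm (Fin n)}
    (hσ : σ ∈ G A) (i : Fin n) : sVec A (σ i) = sVec A i := by
  rw [sVec_apply, sVec_apply]
  rw [← Equiv.sum_comp σ fun j => A (σ i) j]
  exact Finset.sum_congr rfl fun j _ => hσ i j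

lemma sVec_eq_of_same {A : Matrix (Fin n) (Fin n) ℝ} {i j : Fin n}
    (h : SameAutOrbit A i j) : sVec A i = sVec A j := by
  obtain ⟨σ, hσ, rfl⟩ := same_iff.mp h
  exact sVec_G_invariant hσ j |>.symm ▸ rfl

/-! ### support lemma -/

lemma support_lemma (S : Matrix (Fin n) (Fin n) ℝ) (s : Fin n → ℝ)
    (hpos : ∀ i j, 0 ≤ S i j) (hrow : ∀ i, ∑ j, S i j = 1) (hcol : ∀ j, ∑ i, S i j = 1)
    (hfix : S *ᵥ s = s) : ∀ i j, S i j ≠ 0 → s i = s j := by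
  have key : ∑ i, ∑ j, S i j * (s i - s j)^2 = 0 := by
    have e1 : ∑ i, ∑ j, S i j * (s i)^2 = ∑ i, (s i)^2 := by
      refine Finset.sum_congr rfl fun i _ => ?_
      rw [← Finset.sum_mul, hrow, one_mul]
    have e2 : ∑ i, ∑ j, S i j * (s j)^2 = ∑ j, (s j)^2 := by
      rw [Finset.sum_comm]
      refine Finset.sum_congr rfl fun j _ => ?_
      rw [← Finset.sum_mul, hcol, one_mul]
    have e3 : ∑ i, ∑ j, S i j * (s i * s j) = ∑ i, (s i)^2 := by
      refine Finset.sum_congr rfl fun i _ => ?_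
      have hfi : ∑ j, S i j * s j = s i := by
        have := congrFun hfix i
        simpa [Matrix.mulVec, dotProduct] using this
      calc ∑ j, S i j * (s i * s j) = s i * ∑ j, S i j * s j := by
            rw [Finset.mul_sum]; exact Finset.sum_congr rfl fun j _ => by ring
        _ = (s i)^2 := by rw [hfi]; ring
    have expand : ∀ i j, S i j * (s i - s j)^2
        = S i j * (s i)^2 - 2 * (S i j * (s i * s j)) + S i j * (s j)^2 := by
      intro i j; ring
    simp only [expand, Finset.sum_add_distrib, Finset.sum_sub_distrib, ← Finset.mul_sum]
    rw [e1, e2, e3]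
    ring
  intro i j hne
  have hterm : S i j * (s i - s j)^2 = 0 := by
    have h1 : ∀ i ∈ Finset.univ, (0:ℝ) ≤ ∑ j, S i j * (s i - s j)^2 :=
      fun i _ => Finset.sum_nonneg fun j _ => mul_nonneg (hpos i j) (sq_nonneg _)
    have h2 := (Finset.sum_eq_zero_iff_of_nonneg h1).mp key i (Finset.mem_univ i)
    have h3 : ∀ j ∈ Finset.univ, (0:ℝ) ≤ S i j * (s i - s j)^2 :=
      fun j _ => mul_nonneg (hpos i j) (sq_nonneg _)
    exact (Finset.sum_eq_zero_iff_of_nonneg h3).mp h2 j (Finset.mem_univ j)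
  rcases mul_eq_zero.mp hterm with h | h
  · exact absurd h hne
  · have := sq_eq_zero_iff.mp h; linarith

/-! ### eigenbasis machinery -/

section Eigen
variable {m : Type*} [Fintype m] [DecidableEq m]

lemma charpoly_eval (B : Matrix m m ℝ) (μ : ℝ) :
    B.charpoly.eval μ = (μ • (1: Matrix m m ℝ) - B).det := by
  rw [Matrix.charpoly, ← Polynomial.coe_evalRingHom, RingHom.map_det]
  congr 1
  ext i j
  simp [charmatrix_apply, Matrix.one_apply, Matrix.smul_apply]
  split <;> simp [Matrix.diagonal_apply, *]

lemma exists_eigenvec (B : Matrix m m ℝ) {μ : ℝ} (hμ : μ ∈ B.charpoly.roots) :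
    ∃ v : m → ℝ, v ≠ 0 ∧ B *ᵥ v = μ • v := by
  have hroot : B.charpoly.eval μ = 0 := by
    exact (Polynomial.mem_roots (B.charpoly_monic.ne_zero)).mp hμ
  rw [charpoly_eval] at hroot
  obtain ⟨v, hv0, hv⟩ := (Matrix.exists_mulVec_eq_zero_iff).mpr hroot
  refine ⟨v, hv0, ?_⟩
  have := hv
  rw [Matrix.sub_mulVec, sub_eq_zero] at this
  rw [← this]
  simp [Matrix.smul_mulVec]

lemma exists_eigenbasis [Nonempty m] (B : Matrix m m ℝ) (h : SimpleSpectrum B) :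
    ∃ (μ : m → ℝ) (b : Module.Basis m ℝ (m → ℝ)),
      Function.Injective μ ∧ ∀ k, B *ᵥ b k = μ k • b k := by
  classical
  set R := B.charpoly.roots.toFinset with hR
  have hcard : R.card = Fintype.card m := h
  have hvec : ∀ μ : ↥R, ∃ v : m → ℝ, v ≠ 0 ∧ B *ᵥ v = (μ:ℝ) • v := by
    rintro ⟨μ, hμ⟩
    exact exists_eigenvec B (Multiset.mem_toFinset.mp hμ)
  choose v hv0 hvB using hvec
  have hind : LinearIndependent ℝ v := by
    apply Module.End.eigenvectors_linearIndependent' (B.mulVecLin) (fun μ : ↥R => (μ:ℝ))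
      Subtype.coe_injective
    intro k
    refine ⟨Module.End.mem_eigenspace_iff.mpr ?_, hv0 k⟩
    simpa using hvB k
  have hne : Nonempty ↥R := by
    have : 0 < R.card := by rw [hcard]; exact Fintype.card_pos
    obtain ⟨x, hx⟩ := Finset.card_pos.mp this
    exact ⟨⟨x, hx⟩⟩
  have hcard' : Fintype.card ↥R = Module.finrank ℝ (m → ℝ) := by
    rw [Fintype.card_coe, hcard, Module.finrank_fintype_fun_eq_card]
  let b := basisOfLinearIndependentOfCardEqFinrank hind hcard'
  have hb : ⇑b = v := coe_basisOfLinearIndependentOfCardEqFinrank hind hcard'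
  have e : m ≃ ↥R := by
    apply Fintype.equivOfCardEq
    rw [Fintype.card_coe, hcard]
  refine ⟨fun k => ((e k : ℝ)), b.reindex e.symm, ?_, ?_⟩
  · intro x y hxy
    exact e.injective (Subtype.coe_injective hxy)
  · intro k
    rw [Module.Basis.reindex_apply]
    simp only [Equiv.symm_symm, hb]
    exact hvB (e k)

lemma matrix_eq_of_mulVec_eq {M N : Matrix m m ℝ} (h : ∀ v, M *ᵥ v = N *ᵥ v) : M = N := by
  have : Matrix.toLin' M = Matrix.toLin' N := by
    apply LinearMap.ext; intro v; simpa [Matrix.toLin'_apply] using h v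
  exact Matrix.toLin'.injective this

lemma eq_of_mulVec_basis {ι : Type*} [Fintype ι] (b : Module.Basis ι ℝ (m → ℝ)) {M N : Matrix m m ℝ}
    (h : ∀ k, M *ᵥ b k = N *ᵥ b k) : M = N := by
  apply matrix_eq_of_mulVec_eq
  intro v
  have : M.mulVecLin = N.mulVecLin := Module.Basis.ext b (by simpa using h)
  simpa [Matrix.mulVecLin_apply] using LinearMap.congr_fun this v

lemma commutant_scalar {ι : Type*} [Fintype ι] [DecidableEq ι]
    {B : Matrix m m ℝ} {μ : ι → ℝ} (hμ : Function.Injective μ)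
    (b : Module.Basis ι ℝ (m → ℝ)) (hb : ∀ k, B *ᵥ b k = μ k • b k)
    {M : Matrix m m ℝ} (hM : M * B = B * M) (k : ι) :
    M *ᵥ b k = (b.repr (M *ᵥ b k) k) • b k := by
  set w := M *ᵥ b k with hw
  have hBw : B *ᵥ w = μ k • w := by
    rw [hw, Matrix.mulVec_mulVec, ← hM, ← Matrix.mulVec_mulVec, hb k]
    simp [Matrix.mulVec_smul]
  have hrepr : ∀ l, μ l • (b.repr w) l = μ k • (b.repr w) l := by
    intro l
    have h1 : B *ᵥ w = ∑ l, (b.repr w l * μ l) • b l := by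
      conv_lhs => rw [← b.sum_repr w, ← Matrix.mulVecLin_apply]
      rw [map_sum]
      refine Finset.sum_congr rfl fun l _ => ?_
      rw [_root_.map_smul, Matrix.mulVecLin_apply, hb l, smul_smul, mul_comm]
    have h2 : B *ᵥ w = ∑ l, (μ k * b.repr w l) • b l := by
      rw [hBw]
      conv_lhs => rw [← b.sum_repr w]
      rw [Finset.smul_sum]
      refine Finset.sum_congr rfl fun l _ => ?_
      rw [smul_smul]
    have h3 := h1.symm.trans h2
    have h4 : ∀ l, b.repr w l * μ l = μ k * b.repr w l := by
      intro l
      have := congrArg (fun x => b.repr x l) h3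
      simpa [map_sum, Finsupp.smul_apply, Finsupp.single_apply, b.repr_self_apply, mul_ite,
        Finset.sum_ite_eq'] using this
    simp only [smul_eq_mul]
    linear_combination h4 l
  have hzero : ∀ l, l ≠ k → b.repr w l = 0 := by
    intro l hl
    have := hrepr l
    simp only [smul_eq_mul] at this
    rcases mul_eq_zero.mp (show (μ l - μ k) * b.repr w l = 0 by linear_combination this) with h | h
    · exact absurd (hμ (sub_eq_zero.mp h)) hl
    · exact h
  conv_lhs => rw [← b.sum_repr w]
  rw [Finset.sum_eq_single k]
  · intro l _ hl; rw [hzero l hl, zero_smul]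
  · intro h; exact absurd (Finset.mem_univ k) h

lemma commutant_commute [Nonempty m] (B : Matrix m m ℝ) (h : SimpleSpectrum B)
    {M N : Matrix m m ℝ} (hM : M * B = B * M) (hN : N * B = B * N) : M * N = N * M := by
  obtain ⟨μ, b, hμ, hb⟩ := exists_eigenbasis B h
  apply eq_of_mulVec_basis b
  intro k
  have hMk := commutant_scalar hμ b hb hM k
  have hNk := commutant_scalar hμ b hb hN k
  conv_lhs => rw [← Matrix.mulVec_mulVec, hNk, Matrix.mulVec_smul, hMk, smul_smul]
  conv_rhs => rw [← Matrix.mulVec_mulVec, hMk, Matrix.mulVec_smul, hNk, smul_smul]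
  rw [mul_comm]

lemma commutant_combo [Nonempty m] (B : Matrix m m ℝ) (h : SimpleSpectrum B)
    (P : m → Matrix m m ℝ) (hP : ∀ x, P x * B = B * P x)
    (hind : LinearIndependent ℝ P)
    (T : Matrix m m ℝ) (hT : T * B = B * T) :
    ∃ c : m → ℝ, T = ∑ x, c x • P x := by
  obtain ⟨μ, b, hμ, hb⟩ := exists_eigenbasis B h
  let f : Matrix m m ℝ →ₗ[ℝ] (m → ℝ) :=
    { toFun := fun M => fun k => b.repr (M *ᵥ b k) k
      map_add' := by intro M N; funext k; simp [Matrix.add_mulVec]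
      map_smul' := by intro r M; funext k; simp [Matrix.smul_mulVec] }
  have hfscal : ∀ M : Matrix m m ℝ, M * B = B * M → ∀ k, M *ᵥ b k = f M k • b k :=
    fun M hM k => commutant_scalar hμ b hb hM k
  have hker : ∀ M : Matrix m m ℝ, M * B = B * M → f M = 0 → M = 0 := by
    intro M hM h0
    apply eq_of_mulVec_basis b
    intro k
    rw [hfscal M hM k, congrFun h0 k]
    simp [Matrix.zero_mulVec]
  have hcomm_sum : ∀ c : m → ℝ, (∑ y, c y • P y) * B = B * (∑ y, c y • P y) := by
    intro c
    rw [Finset.sum_mul, Finset.mul_sum]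
    refine Finset.sum_congr rfl fun y _ => ?_
    rw [Matrix.smul_mul, Matrix.mul_smul, hP y]
  have hindf : LinearIndependent ℝ (fun x => f (P x)) := by
    rw [Fintype.linearIndependent_iff]
    intro c hc
    have hf0 : f (∑ y, c y • P y) = 0 := by
      rw [map_sum]
      simpa using hc
    have := hker _ (hcomm_sum c) hf0
    exact Fintype.linearIndependent_iff.mp hind c this
  have hcard : Fintype.card m = Module.finrank ℝ (m → ℝ) := by
    simp [Module.finrank_fintype_fun_eq_card]
  let bb := basisOfLinearIndependentOfCardEqFinrank hindf hcard
  have hbb : ⇑bb = fun x => f (P x) := coe_basisOfLinearIndependentOfCardEqFinrank hindf hcard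
  refine ⟨fun x => bb.repr (f T) x, ?_⟩
  have hfeq : f (T - ∑ x, (bb.repr (f T) x : ℝ) • P x) = 0 := by
    rw [map_sub, map_sum]
    have : ∑ x, f ((bb.repr (f T) x : ℝ) • P x) = ∑ x, (bb.repr (f T) x : ℝ) • bb x := by
      refine Finset.sum_congr rfl fun x _ => ?_
      rw [_root_.map_smul, hbb]
    rw [this, bb.sum_repr (f T), sub_self]
  have hcommd : (T - ∑ x, (bb.repr (f T) x : ℝ) • P x) * B
      = B * (T - ∑ x, (bb.repr (f T) x : ℝ) • P x) := by
    rw [Matrix.sub_mul, Matrix.mul_sub, hT, hcomm_sum]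
  have := hker _ hcommd hfeq
  exact sub_eq_zero.mp this

end Eigen

/-! ### rank and injectivity -/

lemma mulVec_injective_of_rank {m l : Type*} [Fintype m] [Fintype l] [DecidableEq l]
    (C : Matrix m l ℝ) (h : C.rank = Fintype.card l) : Function.Injective C.mulVec := by
  have hrn := LinearMap.finrank_range_add_finrank_ker (C.mulVecLin)
  rw [Module.finrank_fintype_fun_eq_card] at hrn
  rw [Matrix.rank] at h
  have hker : Module.finrank ℝ (LinearMap.ker C.mulVecLin) = 0 := by omega
  have hbot : LinearMap.ker C.mulVecLin = ⊥ := Submodule.finrank_eq_zero.mp hker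
  have hinj := LinearMap.ker_eq_bot.mp hbot
  intro x y hxy
  exact hinj (by simpa [Matrix.mulVecLin_apply] using hxy)

/-! ### convexity direction -/

lemma pm_mem_DS (σ : Equiv.Perm (Fin n)) : pm n σ ∈ DS n := by
  refine ⟨fun i j => ?_, fun i => ?_, fun j => ?_⟩
  · dsimp [pm]; split <;> norm_num
  · dsimp [pm]
    rw [Finset.sum_eq_single (σ⁻¹ i)] <;> simp +contextual [Equiv.Perm.eq_inv_iff_eq, Equiv.eq_symm_apply]
  · dsimp [pm]
    rw [Finset.sum_eq_single (σ j)]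
    · simp
    · intro b _ hb
      simp [Ne.symm hb]
    · intro h; exact absurd (Finset.mem_univ (σ j)) h

lemma autConv_convex (A : Matrix (Fin n) (Fin n) ℝ) : Convex ℝ (AutConv A) := by
  rintro S ⟨⟨hS0, hSr, hSc⟩, hSA⟩ T ⟨⟨hT0, hTr, hTc⟩, hTA⟩ a b ha hb hab
  refine ⟨⟨fun i j => ?_, fun i => ?_, fun j => ?_⟩, ?_⟩
  · have : (a • S + b • T) i j = a * S i j + b * T i j := by
      simp [Matrix.add_apply, Matrix.smul_apply]
    rw [this]
    exact add_nonneg (mul_nonneg ha (hS0 i j)) (mul_nonneg hb (hT0 i j))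
  · simp only [Matrix.add_apply, Matrix.smul_apply, smul_eq_mul, Finset.sum_add_distrib,
      ← Finset.mul_sum, hSr, hTr, mul_one, hab]
  · simp only [Matrix.add_apply, Matrix.smul_apply, smul_eq_mul, Finset.sum_add_distrib,
      ← Finset.mul_sum, hSc, hTc, mul_one, hab]
  · rw [Matrix.mul_add, Matrix.add_mul, Matrix.mul_smul, Matrix.smul_mul, hSA,
      Matrix.mul_smul, Matrix.smul_mul, hTA]

lemma convexHull_aut_subset (A : Matrix (Fin n) (Fin n) ℝ) :
    convexHull ℝ (Aut A) ⊆ AutConv A := by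
  apply convexHull_min ?_ (autConv_convex A)
  rintro P ⟨⟨σ, rfl⟩, hc⟩
  exact ⟨pm_mem_DS σ, hc⟩

/-! ### sum helpers -/

lemma collapse {α : Type*} [Fintype α] [DecidableEq α] (f : α → ℝ) (p : α → Prop)
    [DecidablePred p] (c : α) (hp : ∀ k, p k ↔ k = c) :
    ∑ k, (if p k then f k else 0) = f c := by
  rw [Finset.sum_congr rfl fun k _ => if_congr (hp k) rfl rfl]
  simp

lemma sum_subtype_eq {α : Type*} [Fintype α] [DecidableEq α] (O : Finset α) (F : α → ℝ)
    (hF : ∀ k, k ∉ O → F k = 0) : ∑ k : ↥O, F (k : α) = ∑ k, F k := by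
  rw [← Finset.sum_subset (Finset.subset_univ O) (fun k _ hk => hF k hk)]
  exact (Finset.sum_subtype (s := O) (p := (· ∈ O)) (fun k => Iff.rfl) F).symm

end Stmt7

/-- let `A` be symmetric. If there is an orbit `Or` of `Aut A` such that
(1) `s(A)` is discriminative, (2) for every other orbit `Oj` the submatrix `A_{rj}` has
full rank `|Oj|`, and (3) the submatrix `A_{rr}` has simple spectrum, then `DS(A)` is
convex exact. -/
theorem stmt7 {n : ℕ} (A : Matrix (Fin n) (Fin n) ℝ) (hA : A.IsSymm)
    (Or : Finset (Fin n)) (hOr : IsAutOrbit A Or)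
    (hdisc : ∀ i j, ¬ SameAutOrbit A i j → sVec A i ≠ sVec A j)
    (hrank : ∀ Oj : Finset (Fin n), IsAutOrbit A Oj → Oj ≠ Or →
      (A.submatrix (fun x : Or => (x : Fin n)) (fun y : Oj => (y : Fin n))).rank = Oj.card)
    (hsimple : SimpleSpectrum
      (A.submatrix (fun x : Or => (x : Fin n)) (fun y : Or => (y : Fin n)))) :
    ConvexExact A := by
  classical
  open Stmt7 in
  apply Set.Subset.antisymm ?_ (Stmt7.convexHull_aut_subset A)
  intro S hS
  obtain ⟨⟨hS0, hSr, hSc⟩, hSA⟩ := hS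
  obtain ⟨a, ha⟩ := hOr
  have haa : a ∈ Or := (ha a).mpr (Stmt7.same_refl A a)
  -- `S` fixes the row-sum vector
  have hone : S *ᵥ (1 : Fin n → ℝ) = 1 := by
    funext i
    simpa [Matrix.mulVec, dotProduct] using hSr i
  have hfix : S *ᵥ sVec A = sVec A := by
    show S *ᵥ (A *ᵥ 1) = A *ᵥ 1
    rw [Matrix.mulVec_mulVec, ← hSA, ← Matrix.mulVec_mulVec, hone]
  -- support of `S` is within orbits
  have hsupp : ∀ i j, S i j ≠ 0 → SameAutOrbit A i j := by
    intro i j hne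
    by_contra hns
    exact hdisc i j hns (Stmt7.support_lemma S (sVec A) hS0 hSr hSc hfix i j hne)
  -- preservation of orbits
  have hpres : ∀ {σ : Equiv.Perm (Fin n)}, σ ∈ Stmt7.G A → ∀ {j : Fin n},
      j ∈ Or → σ j ∈ Or := by
    intro σ hσ j hj
    have h1 : SameAutOrbit A a j := (ha j).mp hj
    have h2 : SameAutOrbit A (σ j) j := Stmt7.same_iff.mpr ⟨σ, hσ, rfl⟩
    exact (ha (σ j)).mpr (Stmt7.same_trans h1 (Stmt7.same_symm h2))
  have hOrne : Nonempty ↥Or := ⟨⟨a, haa⟩⟩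
  -- the restricted matrices
  set B : Matrix ↥Or ↥Or ℝ :=
    A.submatrix (fun x : Or => (x : Fin n)) (fun y : Or => (y : Fin n)) with hB
  set T : Matrix ↥Or ↥Or ℝ :=
    S.submatrix (fun x : Or => (x : Fin n)) (fun y : Or => (y : Fin n)) with hT
  set Pm : Equiv.Perm (Fin n) → Matrix ↥Or ↥Or ℝ :=
    fun σ => Matrix.of fun u y : ↥Or => if σ (y : Fin n) = (u : Fin n) then (1:ℝ) else 0
    with hPm
  -- choice of group elements carrying `a` to each point of the orbit
  have hgex : ∀ x : ↥Or, ∃ σ, σ ∈ Stmt7.G A ∧ σ a = (x : Fin n) := by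
    intro x
    obtain ⟨σ, hσ, hxa⟩ := Stmt7.same_iff.mp ((ha x).mp x.2)
    exact ⟨σ⁻¹, Stmt7.inv_mem_G hσ, by rw [← hxa]; simp⟩
  choose g hgG hga using hgex
  -- Pm σ commutes with B
  have hPmB : ∀ {σ : Equiv.Perm (Fin n)}, σ ∈ Stmt7.G A → Pm σ * B = B * Pm σ := by
    intro σ hσ
    ext u y
    have hL : (Pm σ * B) u y = A (σ⁻¹ (u : Fin n)) (y : Fin n) := by
      rw [Matrix.mul_apply]
      simp only [hPm, Matrix.of_apply, ite_mul, one_mul, zero_mul, hB, Matrix.submatrix_apply]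
      exact Stmt7.collapse (fun k : ↥Or => A (k : Fin n) (y : Fin n))
        (fun k : ↥Or => σ (k : Fin n) = (u : Fin n))
        ⟨σ⁻¹ (u : Fin n), hpres (Stmt7.inv_mem_G hσ) u.2⟩
        (fun k => by
          constructor
          · intro h; apply Subtype.ext; simp [← h]
          · intro h; rw [Subtype.ext_iff] at h; simp [h])
    have hR : (B * Pm σ) u y = A (u : Fin n) (σ (y : Fin n)) := by
      rw [Matrix.mul_apply]
      simp only [hPm, Matrix.of_apply, mul_ite, mul_one, mul_zero, hB, Matrix.submatrix_apply]
      exact Stmt7.collapse (fun k : ↥Or => A (u : Fin n) (k : Fin n))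
        (fun k : ↥Or => σ (y : Fin n) = (k : Fin n))
        ⟨σ (y : Fin n), hpres hσ y.2⟩
        (fun k => by
          constructor
          · intro h; apply Subtype.ext; simp [← h]
          · intro h; rw [Subtype.ext_iff] at h; simp [h])
    rw [hL, hR]
    have := hσ (σ⁻¹ (u : Fin n)) (y : Fin n)
    simpa using this.symm
  -- T commutes with B
  have hTB : T * B = B * T := by
    ext u y
    have hL : (T * B) u y = (S * A) (u : Fin n) (y : Fin n) := by
      rw [Matrix.mul_apply, Matrix.mul_apply]
      simp only [hT, hB, Matrix.submatrix_apply]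
      apply Stmt7.sum_subtype_eq Or (fun k => S (u : Fin n) k * A k (y : Fin n))
      intro k hk
      have : S (u : Fin n) k = 0 := by
        by_contra hne
        exact hk ((ha k).mpr (Stmt7.same_trans ((ha u).mp u.2) (hsupp _ _ hne)))
      rw [this, zero_mul]
    have hR : (B * T) u y = (A * S) (u : Fin n) (y : Fin n) := by
      rw [Matrix.mul_apply, Matrix.mul_apply]
      simp only [hT, hB, Matrix.submatrix_apply]
      apply Stmt7.sum_subtype_eq Or (fun k => A (u : Fin n) k * S k (y : Fin n))
      intro k hk
      have : S k (y : Fin n) = 0 := by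
        by_contra hne
        exact hk ((ha k).mpr (Stmt7.same_trans ((ha y).mp y.2)
          (Stmt7.same_symm (hsupp _ _ hne))))
      rw [this, mul_zero]
    rw [hL, hR, hSA]
  -- multiplication of Pm's
  have hPmmul : ∀ {σ τ : Equiv.Perm (Fin n)}, σ ∈ Stmt7.G A → τ ∈ Stmt7.G A →
      ∀ u y : ↥Or, (Pm σ * Pm τ) u y = if σ (τ (y : Fin n)) = (u : Fin n) then (1:ℝ) else 0 := by
    intro σ τ hσ hτ u y
    rw [Matrix.mul_apply]
    simp only [hPm, Matrix.of_apply, mul_ite, mul_one, mul_zero]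
    exact Stmt7.collapse (fun k : ↥Or => if σ (k : Fin n) = (u : Fin n) then (1:ℝ) else 0)
      (fun k : ↥Or => τ (y : Fin n) = (k : Fin n))
      ⟨τ (y : Fin n), hpres hτ y.2⟩
      (fun k => by
        constructor
        · intro h; apply Subtype.ext; simp [← h]
        · intro h; rw [Subtype.ext_iff] at h; simp [h])
  -- elements of G commute on the orbit
  have hfuncomm : ∀ {σ τ : Equiv.Perm (Fin n)}, σ ∈ Stmt7.G A → τ ∈ Stmt7.G A →
      ∀ y : Fin n, y ∈ Or → σ (τ y) = τ (σ y) := by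
    intro σ τ hσ hτ y hy
    have hmat : Pm σ * Pm τ = Pm τ * Pm σ :=
      Stmt7.commutant_commute B hsimple (hPmB hσ) (hPmB hτ)
    have h1 := hPmmul hσ hτ ⟨σ (τ y), hpres hσ (hpres hτ hy)⟩ ⟨y, hy⟩
    have h2 := hPmmul hτ hσ ⟨σ (τ y), hpres hσ (hpres hτ hy)⟩ ⟨y, hy⟩
    rw [hmat] at h1
    rw [h2] at h1
    simp only [if_pos rfl] at h1
    by_contra hne
    rw [if_neg (by simpa using fun hcontra => hne hcontra.symm)] at h1
    norm_num at h1
  -- two elements of G agreeing at one point of the orbit agree on the orbit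
  have hagree : ∀ {σ τ : Equiv.Perm (Fin n)}, σ ∈ Stmt7.G A → τ ∈ Stmt7.G A →
      ∀ {y : Fin n}, y ∈ Or → σ y = τ y → ∀ {j : Fin n}, j ∈ Or → σ j = τ j := by
    intro σ τ hσ hτ y hy hyeq j hj
    have h1 : SameAutOrbit A y j :=
      Stmt7.same_trans (Stmt7.same_symm ((ha y).mp hy)) ((ha j).mp hj)
    obtain ⟨π, hπ, hπj⟩ := Stmt7.same_iff.mp h1
    have hπinv : π⁻¹ ∈ Stmt7.G A := Stmt7.inv_mem_G hπ
    have hj' : j = π⁻¹ y := by rw [← hπj]; simp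
    rw [hj']
    calc σ (π⁻¹ y) = π⁻¹ (σ y) := hfuncomm hσ hπinv y hy
      _ = π⁻¹ (τ y) := by rw [hyeq]
      _ = τ (π⁻¹ y) := (hfuncomm hτ hπinv y hy).symm
  -- distinct base images give pointwise-distinct maps on the orbit
  have hgdist : ∀ x x' : ↥Or, x ≠ x' → ∀ j : Fin n, j ∈ Or → g x j ≠ g x' j := by
    intro x x' hne j hj heq
    apply hne
    have := hagree (hgG x) (hgG x') hj heq haa
    apply Subtype.ext
    rw [← hga x, ← hga x', this]
  -- linear independence of the family Pm (g x)
  have hind : LinearIndependent ℝ (fun x : ↥Or => Pm (g x)) := by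
    rw [Fintype.linearIndependent_iff]
    intro c hc x
    have := congrFun (congrFun hc x) ⟨a, haa⟩
    simp only [Matrix.sum_apply, Matrix.smul_apply, Matrix.zero_apply, smul_eq_mul,
      hPm, Matrix.of_apply, mul_ite, mul_one, mul_zero] at this
    rw [Stmt7.collapse (fun x' : ↥Or => c x')
      (fun x' : ↥Or => g x' ((⟨a, haa⟩ : ↥Or) : Fin n) = (x : Fin n)) x
      (fun x' => by
        constructor
        · intro h
          by_contra hne
          exact hgdist x' x hne a haa (by rw [h, hga x])
        · intro h; rw [h]; exact hga x)] at this
    exact this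
  -- decompose T as a combination of the Pm (g x)
  obtain ⟨c, hcT⟩ := Stmt7.commutant_combo B hsimple (fun x : ↥Or => Pm (g x))
    (fun x => hPmB (hgG x)) hind T hTB
  -- identify the coefficients
  have hcval : ∀ x : ↥Or, c x = S (x : Fin n) a := by
    intro x
    have := congrFun (congrFun hcT x) ⟨a, haa⟩
    simp only [Matrix.sum_apply, Matrix.smul_apply, smul_eq_mul,
      hPm, Matrix.of_apply, mul_ite, mul_one, mul_zero] at this
    rw [Stmt7.collapse (fun x' : ↥Or => c x')
      (fun x' : ↥Or => g x' ((⟨a, haa⟩ : ↥Or) : Fin n) = (x : Fin n)) x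
      (fun x' => by
        constructor
        · intro h
          by_contra hne
          exact hgdist x' x hne a haa (by rw [h, hga x])
        · intro h; rw [h]; exact hga x)] at this
    rw [← this]
    simp [hT]
  have hc0 : ∀ x : ↥Or, 0 ≤ c x := fun x => (hcval x) ▸ hS0 (x : Fin n) a
  have hc1 : ∑ x : ↥Or, c x = 1 := by
    have : ∑ x : ↥Or, S (x : Fin n) a = ∑ k, S k a := by
      apply Stmt7.sum_subtype_eq Or (fun k => S k a)
      intro k hk
      by_contra hne
      exact hk ((ha k).mpr (Stmt7.same_symm (hsupp _ _ hne)))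
    rw [Finset.sum_congr rfl fun x _ => hcval x, this, hSc a]
  -- the final identity: S is the corresponding convex combination
  have hmain : S = ∑ x : ↥Or, c x • pm n (g x) := by
    ext u v
    have hRHS : (∑ x : ↥Or, c x • pm n (g x)) u v
        = ∑ x : ↥Or, c x * (if g x v = u then (1:ℝ) else 0) := by
      rw [Matrix.sum_apply]
      exact Finset.sum_congr rfl fun x _ => by
        rw [Matrix.smul_apply, Stmt7.pm_apply, smul_eq_mul]
    rw [hRHS]
    by_cases hv : v ∈ Or
    · by_cases hu : u ∈ Or
      · have := congrFun (congrFun hcT ⟨u, hu⟩) ⟨v, hv⟩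
        simp only [hT, Matrix.submatrix_apply, Matrix.sum_apply, Matrix.smul_apply,
          hPm, Matrix.of_apply, smul_eq_mul] at this
        exact this
      · have hL : S u v = 0 := by
          by_contra hne
          exact hu ((ha u).mpr (Stmt7.same_trans ((ha v).mp hv)
            (Stmt7.same_symm (hsupp u v hne))))
        rw [hL]
        symm; apply Finset.sum_eq_zero
        intro x _
        rw [if_neg, mul_zero]
        intro h
        exact hu (h ▸ hpres (hgG x) hv)
    · set Ov : Finset (Fin n) := Finset.univ.filter (fun j => SameAutOrbit A v j) with hOvdef
      have hmemOv : ∀ {j : Fin n}, j ∈ Ov ↔ SameAutOrbit A v j := by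
        intro j; simp [hOvdef]
      have hOvorb : IsAutOrbit A Ov := ⟨v, fun j => hmemOv⟩
      have hvOv : v ∈ Ov := hmemOv.mpr (Stmt7.same_refl A v)
      have hOvne : Ov ≠ Or := fun h => hv (h ▸ hvOv)
      set C : Matrix ↥Or ↥Ov ℝ :=
        A.submatrix (fun x : Or => (x : Fin n)) (fun y : Ov => (y : Fin n)) with hC
      have hinj : Function.Injective C.mulVec := by
        apply Stmt7.mulVec_injective_of_rank
        rw [Fintype.card_coe]
        exact hrank Ov hOvorb hOvne
      have hgpres : ∀ (x : ↥Or) {j : Fin n}, j ∈ Ov → g x j ∈ Ov := by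
        intro x j hj
        refine hmemOv.mpr (Stmt7.same_trans (hmemOv.mp hj) ?_)
        exact Stmt7.same_symm (Stmt7.same_iff.mpr ⟨g x, hgG x, rfl⟩)
      by_cases hu : u ∈ Ov
      · set p : ↥Ov → ℝ := fun w => S (w : Fin n) v with hp
        set q : ↥Ov → ℝ :=
          fun w => ∑ x : ↥Or, c x * (if g x v = (w : Fin n) then (1:ℝ) else 0) with hq
        have hstep1 : ∀ w : ↥Or,
            (C *ᵥ p) w = ∑ x : ↥Or, c x * A ((g x)⁻¹ (w : Fin n)) v := by
          intro w
          have hLp : (C *ᵥ p) w = (A * S) (w : Fin n) v := by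
            rw [Matrix.mulVec, dotProduct, Matrix.mul_apply]
            simp only [hC, Matrix.submatrix_apply, hp]
            apply Stmt7.sum_subtype_eq Ov (fun k => A (w : Fin n) k * S k v)
            intro k hk
            have : S k v = 0 := by
              by_contra hne
              exact hk (hmemOv.mpr (Stmt7.same_symm (hsupp k v hne)))
            rw [this, mul_zero]
          rw [hLp, hSA, Matrix.mul_apply]
          rw [← Stmt7.sum_subtype_eq Or (fun k => S (w : Fin n) k * A k v) (by
            intro k hk
            have : S (w : Fin n) k = 0 := by
              by_contra hne
              exact hk ((ha k).mpr (Stmt7.same_trans ((ha w).mp w.2) (hsupp _ _ hne)))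
            simp [this])]
          have hTentry : ∀ k : ↥Or, S (w : Fin n) (k : Fin n)
              = ∑ x : ↥Or, c x * (if g x (k : Fin n) = (w : Fin n) then (1:ℝ) else 0) := by
            intro k
            have := congrFun (congrFun hcT w) k
            simpa [hT, hPm, Matrix.sum_apply, Matrix.smul_apply, smul_eq_mul] using this
          rw [Finset.sum_congr rfl (fun k _ => by rw [hTentry k, Finset.sum_mul])]
          rw [Finset.sum_comm]
          refine Finset.sum_congr rfl fun x _ => ?_
          simp only [mul_ite, mul_one, mul_zero, ite_mul, zero_mul]
          have := Stmt7.collapse (fun k : ↥Or => c x * A (k : Fin n) v)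
            (fun k : ↥Or => g x (k : Fin n) = (w : Fin n))
            ⟨(g x)⁻¹ (w : Fin n), hpres (Stmt7.inv_mem_G (hgG x)) w.2⟩
            (fun k => by
              constructor
              · intro h; apply Subtype.ext; simp [← h]
              · intro h; rw [Subtype.ext_iff] at h; simp [h])
          exact this
        have hstep2 : ∀ w : ↥Or,
            (C *ᵥ q) w = ∑ x : ↥Or, c x * A (w : Fin n) (g x v) := by
          intro w
          rw [Matrix.mulVec, dotProduct]
          simp only [hC, Matrix.submatrix_apply, hq]
          rw [Finset.sum_congr rfl (fun k _ => Finset.mul_sum _ _ _)]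
          rw [Finset.sum_comm]
          refine Finset.sum_congr rfl fun x _ => ?_
          have hre : ∀ k : ↥Ov, A (w : Fin n) (k : Fin n)
                * (c x * (if g x v = (k : Fin n) then (1:ℝ) else 0))
              = (if g x v = (k : Fin n) then c x * A (w : Fin n) (k : Fin n) else 0) := by
            intro k
            split <;> ring
          rw [Finset.sum_congr rfl (fun k _ => hre k)]
          have := Stmt7.collapse (fun k : ↥Ov => c x * A (w : Fin n) (k : Fin n))
            (fun k : ↥Ov => g x v = (k : Fin n))
            ⟨g x v, hgpres x hvOv⟩
            (fun k => by
              constructor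
              · intro h; apply Subtype.ext; simp [← h]
              · intro h; rw [Subtype.ext_iff] at h; simp [h])
          exact this
        have hkey : C *ᵥ p = C *ᵥ q := by
          funext w
          rw [hstep1 w, hstep2 w]
          refine Finset.sum_congr rfl fun x _ => ?_
          have := hgG x ((g x)⁻¹ (w : Fin n)) v
          rw [show ∀ y, (g x) ((g x)⁻¹ y) = y from fun y => by simp] at this
          rw [this]
        have := congrFun (hinj hkey) ⟨u, hu⟩
        simpa [hp, hq] using this
      · have hL : S u v = 0 := by
          by_contra hne
          exact hu (hmemOv.mpr (Stmt7.same_symm (hsupp u v hne)))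
        rw [hL]
        symm; apply Finset.sum_eq_zero
        intro x _
        rw [if_neg, mul_zero]
        intro h
        exact hu (h ▸ hgpres x hvOv)
  rw [hmain]
  exact (convex_convexHull ℝ (Aut A)).sum_mem
    (fun x _ => hc0 x) hc1
    (fun x _ => subset_convexHull ℝ (Aut A) (Stmt7.pm_mem_aut_iff.mpr (hgG x)))
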